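/- Let A ∈ ℝ^{m×n} have full row rank m, with no zero rows, and let W be the invertible lower-triangular matrix with W + W^T = 2AA^T. If a vector u ∈ ℝ^n satisfies R_A u = u, where R_A = R_m ⋯ R_1 is the product of the row reflections of A, then A u = 0. Conversely, if A u = 0 then R_A u = u. Hence the fixed space of R_A equals the kernel of A, and 1 is an eigenvalue of R_A with multiplicity exactly n - m. -/

import Mathlib

open Matrix

/-- The Householder reflection determined by a (nonzero) vector `a`. -/
noncomputable def reflOf {n : ℕ} (a : Fin n → ℝ) : Matrix (Fin n) (Fin n) ℝ :=
  1 - (2 / (∑ j, a j ^ 2)) • Matrix.vecMulVec a a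

/-- The product `R_m ⋯ R_2 R_1` of the Householder reflections of the rows of `A`. -/
noncomputable def reflProd {m n : ℕ} (A : Matrix (Fin m) (Fin n) ℝ) :
    Matrix (Fin n) (Fin n) ℝ :=
  (((List.finRange m).map (fun i => reflOf (A i))).reverse).prod

lemma reflOf_mulVec {n : ℕ} (a u : Fin n → ℝ) :
    (reflOf a) *ᵥ u = u - ((2 / ∑ j, a j ^ 2) * (a ⬝ᵥ u)) • a := by
  funext i
  simp only [reflOf, sub_mulVec, smul_mulVec, one_mulVec, Pi.sub_apply, Pi.smul_apply,
    smul_eq_mul]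
  have : (vecMulVec a a *ᵥ u) i = (a ⬝ᵥ u) * a i := by
    simp only [vecMulVec, mulVec, dotProduct, of_apply, Finset.sum_mul]
    exact Finset.sum_congr rfl fun j _ => by ring
  rw [this]; ring

lemma reflProd_zero {n : ℕ} (A : Matrix (Fin 0) (Fin n) ℝ) : reflProd A = 1 := by
  simp [reflProd]

lemma reflProd_succ {m n : ℕ} (A : Matrix (Fin (m + 1)) (Fin n) ℝ) (u : Fin n → ℝ) :
    reflProd A *ᵥ u =
      reflProd (Matrix.of fun i : Fin m => A i.succ) *ᵥ (reflOf (A 0) *ᵥ u) := by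
  rw [reflProd, List.finRange_succ]
  simp only [List.map_cons, List.map_map, List.reverse_cons, List.prod_append,
    List.prod_cons, List.prod_nil, mul_one]
  rw [← mulVec_mulVec]
  rfl

lemma sum_sq_ne_zero {n : ℕ} {a : Fin n → ℝ} (ha : a ≠ 0) : (∑ j, a j ^ 2) ≠ 0 := by
  obtain ⟨j, hj⟩ := Function.ne_iff.mp ha
  have : (0 : ℝ) < ∑ j, a j ^ 2 := by
    exact Finset.sum_pos' (fun k _ => sq_nonneg _)
      ⟨j, Finset.mem_univ j, lt_of_le_of_ne (sq_nonneg _) (Ne.symm (pow_ne_zero 2 hj))⟩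
  exact this.ne'

/-- The displacement `reflProd A *ᵥ u - u` lies in the row span of `A`. -/
lemma reflProd_sub_mem_span {n : ℕ} :
    ∀ (m : ℕ) (A : Matrix (Fin m) (Fin n) ℝ) (u : Fin n → ℝ),
      reflProd A *ᵥ u - u ∈ Submodule.span ℝ (Set.range A) := by
  intro m
  induction m with
  | zero => intro A u; simp [reflProd_zero]
  | succ m ih =>
    intro A u
    set a := A 0 with ha
    set A' : Matrix (Fin m) (Fin n) ℝ := Matrix.of fun i : Fin m => A i.succ with hA'
    set c : ℝ := (2 / ∑ j, a j ^ 2) * (a ⬝ᵥ u) with hc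
    set P := reflProd A' with hP
    have hsub : Submodule.span ℝ (Set.range A') ≤ Submodule.span ℝ (Set.range A) := by
      apply Submodule.span_mono
      rintro _ ⟨i, rfl⟩; exact ⟨i.succ, rfl⟩
    rw [reflProd_succ A u, reflOf_mulVec]
    have hdecomp : reflProd A' *ᵥ (u - c • a) - u =
        (reflProd A' *ᵥ (u - c • a) - (u - c • a)) + (-c) • a := by
      module
    rw [show ((2 / ∑ j, A 0 j ^ 2) * (A 0 ⬝ᵥ u)) = c from rfl,
      show (Matrix.of fun i : Fin m => A i.succ) = A' from rfl, hdecomp]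
    exact Submodule.add_mem _ (hsub (ih A' _))
      (Submodule.smul_mem _ _ (Submodule.subset_span ⟨0, rfl⟩))

/-- If `A u = 0` then every reflection fixes `u`, hence so does the product. -/
lemma reflProd_fix_of_dot {n : ℕ} :
    ∀ (m : ℕ) (A : Matrix (Fin m) (Fin n) ℝ) (u : Fin n → ℝ),
      (∀ i, A i ⬝ᵥ u = 0) → reflProd A *ᵥ u = u := by
  intro m
  induction m with
  | zero => intro A u _; simp [reflProd_zero]
  | succ m ih =>
    intro A u h
    rw [reflProd_succ, reflOf_mulVec, h 0, mul_zero, zero_smul, sub_zero]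
    exact ih _ u fun i => h i.succ

/-- Key direction: a fixed vector of `reflProd A` is orthogonal to all rows of `A`,
provided the rows are nonzero and linearly independent. -/
lemma dot_eq_zero_of_fix {n : ℕ} :
    ∀ (m : ℕ) (A : Matrix (Fin m) (Fin n) ℝ), (∀ i, A i ≠ 0) →
      LinearIndependent ℝ A → ∀ u : Fin n → ℝ,
      reflProd A *ᵥ u = u → ∀ i, A i ⬝ᵥ u = 0 := by
  intro m
  induction m with
  | zero => intro A _ _ u _ i; exact absurd i.2 (by omega)
  | succ m ih =>
    intro A hA hli u hu
    set a := A 0 with ha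
    set A' : Matrix (Fin m) (Fin n) ℝ := Matrix.of fun i : Fin m => A i.succ with hA'
    set c : ℝ := (2 / ∑ j, a j ^ 2) * (a ⬝ᵥ u) with hc
    set P := reflProd A' with hP
    have hcons : LinearIndependent ℝ (Fin.cons (A 0) (Fin.tail A) : Fin (m+1) → Fin n → ℝ) := by
      have e : (Fin.cons (A 0) (Fin.tail A) : Fin (m+1) → Fin n → ℝ) = A := Fin.cons_self_tail _
      have h2 : LinearIndependent ℝ (A : Fin (m+1) → Fin n → ℝ) := hli
      rw [e]; exact h2
    obtain ⟨hli', hnot⟩ := linearIndependent_fin_cons.mp hcons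
    have hrange : Set.range (Fin.tail A) = Set.range A' := rfl
    rw [hrange] at hnot
    -- the last step
    have hstep : P *ᵥ (u - c • a) = u := by
      rw [hP, hA', ← reflOf_mulVec, ← reflProd_succ]; exact hu
    have hmem : c • a ∈ Submodule.span ℝ (Set.range A') := by
      have h1 := reflProd_sub_mem_span m A' (u - c • a)
      rw [← hP, hstep] at h1
      have : u - (u - c • a) = c • a := by module
      rwa [this] at h1
    have hc0 : c = 0 := by
      by_contra hcne
      exact hnot (by
        have := Submodule.smul_mem _ (c⁻¹) hmem
        rwa [smul_smul, inv_mul_cancel₀ hcne, one_smul] at this)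
    have hau : a ⬝ᵥ u = 0 := by
      rcases mul_eq_zero.mp (hc ▸ hc0) with h | h
      · exact absurd h (div_ne_zero two_ne_zero (sum_sq_ne_zero (hA 0)))
      · exact h
    have hPu : P *ᵥ u = u := by
      rw [hc0, zero_smul, sub_zero] at hstep
      exact hstep
    have hrest := ih A' (fun i => hA i.succ) hli' u hPu
    intro i
    refine Fin.cases hau (fun j => hrest j) i

/-- if `A` has full row rank `m`, then `R_A u = u ↔ A u = 0`;
hence the fixed space of `R_A` is the kernel of `A` and `1` is an eigenvalue
of `R_A` with multiplicity exactly `n - m`. -/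
theorem fixed_space_eq_kernel (m n : ℕ) (A : Matrix (Fin m) (Fin n) ℝ)
    (hA : ∀ i, A i ≠ 0) (hrank : A.rank = m)
    (W : Matrix (Fin m) (Fin m) ℝ)
    (hlow : ∀ i j : Fin m, i < j → W i j = 0)
    (hW : W + Wᵀ = (2 : ℝ) • (A * Aᵀ))
    (hWinv : IsUnit W.det) :
    (∀ u : Fin n → ℝ, (reflProd A).mulVec u = u ↔ A.mulVec u = 0) ∧
    Module.finrank ℝ (LinearMap.ker (Matrix.toLin' (reflProd A - 1))) = n - m := by
  have hli : LinearIndependent ℝ A := by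
    refine linearIndependent_iff_card_eq_finrank_span.mpr ?_
    rw [Set.finrank, Fintype.card_fin]
    exact hrank.symm.trans (Matrix.rank_eq_finrank_span_row A)
  have hiff : ∀ u : Fin n → ℝ, (reflProd A).mulVec u = u ↔ A.mulVec u = 0 := by
    intro u
    constructor
    · intro h
      funext i
      exact dot_eq_zero_of_fix m A hA hli u h i
    · intro h
      exact reflProd_fix_of_dot m A u (fun i => congrFun h i)
  refine ⟨hiff, ?_⟩
  have hker : LinearMap.ker (Matrix.toLin' (reflProd A - 1)) =
      LinearMap.ker (Matrix.toLin' A) := by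
    ext u
    simp only [LinearMap.mem_ker, Matrix.toLin'_apply]
    rw [sub_mulVec, one_mulVec, sub_eq_zero]
    exact hiff u
  rw [hker]
  have hrn := LinearMap.finrank_range_add_finrank_ker (Matrix.toLin' A)
  have hrange : Module.finrank ℝ (LinearMap.range (Matrix.toLin' A)) = A.rank := by
    rw [Matrix.toLin'_apply', Matrix.rank]
  rw [hrange, hrank, Module.finrank_fintype_fun_eq_card, Fintype.card_fin] at hrn
  omega
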